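/- Let G be a connected graph of order n, let k be an integer with 2 ≤ k ≤ n − 1, and let u and v be nonadjacent vertices of G with d(u) + d(v) ≥ n − 1. Let G' be the graph obtained from G by adding the edge uv. Then G has a spanning k-ended-tree if and only if G' has a spanning k-ended-tree. -/

import Mathlib

open Finset
open scoped Classical

/-- The adjacency matrix of a simple graph over ℝ. -/
noncomputable def adjMat {V : Type*} [Fintype V] (G : SimpleGraph V) :
    Matrix V V ℝ := fun i j => if G.Adj i j then 1 else 0

/-- The spectral radius of a graph: the largest (real) eigenvalue of its
adjacency matrix. -/
noncomputable def specRad {V : Type*} [Fintype V] (G : SimpleGraph V) : ℝ :=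
  sSup {μ : ℝ | Module.End.HasEigenvalue (Matrix.mulVecLin (adjMat G)) μ}

/-- The signless Laplacian matrix `Q = D + A` of a simple graph. -/
noncomputable def qMat {V : Type*} [Fintype V] (G : SimpleGraph V) :
    Matrix V V ℝ := fun i j =>
  (if i = j then ((univ.filter fun u => G.Adj i u).card : ℝ) else 0) +
    (if G.Adj i j then 1 else 0)

/-- The signless Laplacian spectral radius of a graph: the largest (real)
eigenvalue of `Q = D + A`. -/
noncomputable def qRad {V : Type*} [Fintype V] (G : SimpleGraph V) : ℝ :=
  sSup {μ : ℝ | Module.End.HasEigenvalue (Matrix.mulVecLin (qMat G)) μ}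

/-- `G` has a spanning `k`-ended-tree: a spanning tree with at most `k`
leaves (vertices of degree 1 in the tree). -/
noncomputable def HasSpanningKEndedTree {V : Type*} [Fintype V]
    (G : SimpleGraph V) (k : ℕ) : Prop :=
  ∃ T : SimpleGraph V, T ≤ G ∧ T.IsTree ∧
    (univ.filter fun v => T.degree v = 1).card ≤ k

/-- `G` has a spanning tree with leaf degree at most `k`: every vertex of the
tree is adjacent (in the tree) to at most `k` leaves of the tree. -/
noncomputable def HasSpanningTreeLeafDegLE {V : Type*} [Fintype V]
    (G : SimpleGraph V) (k : ℕ) : Prop :=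
  ∃ T : SimpleGraph V, T ≤ G ∧ T.IsTree ∧
    ∀ v, (univ.filter fun u => T.Adj v u ∧ T.degree u = 1).card ≤ k

/-- The graph `K₁ ∨ (K_{n-k-1} + kK₁)` on `n` vertices: vertex `0` is joined to
everything, vertices `0, …, n-k-1` form a clique `K_{n-k}`, and the last `k`
vertices are only adjacent to vertex `0`. -/
def oneJoinCliquePlusIso (n k : ℕ) : SimpleGraph (Fin n) :=
  SimpleGraph.fromRel fun i j => i.val = 0 ∨ (i.val < n - k ∧ j.val < n - k)

set_option maxHeartbeats 1600000
set_option linter.unusedSectionVars false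
set_option linter.unusedVariables false

namespace ClosureAux

open SimpleGraph Walk

variable {V : Type*}

lemma isAcyclic_mono {G H : SimpleGraph V} (h : H ≤ G) (hG : G.IsAcyclic) : H.IsAcyclic :=
  fun _ c hc => hG (c.mapLe h) (hc.mapLe h)

/-- Removing an edge of a connected graph, every vertex is still reachable from
one of the two endpoints. -/
lemma reachable_or_of_preconnected {T : SimpleGraph V} (hpre : T.Preconnected) (u v x : V) :
    (T.deleteEdges {s(u,v)}).Reachable u x ∨ (T.deleteEdges {s(u,v)}).Reachable v x := by
  obtain ⟨W⟩ := hpre u x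
  suffices H : ∀ (c y : V) (_ : T.Walk c y),
      (T.deleteEdges {s(u,v)}).Reachable u c ∨ (T.deleteEdges {s(u,v)}).Reachable v c →
      ((T.deleteEdges {s(u,v)}).Reachable u y ∨ (T.deleteEdges {s(u,v)}).Reachable v y) from
    H u x W (Or.inl (Reachable.refl u))
  intro c y W
  induction W with
  | nil => exact id
  | @cons c z y h p ih =>
    intro hc
    apply ih
    by_cases he : s(c, z) = s(u, v)
    · rw [Sym2.eq_iff] at he
      rcases he with ⟨-, rfl⟩ | ⟨-, rfl⟩
      · exact Or.inr (Reachable.refl _)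
      · exact Or.inl (Reachable.refl _)
    · have hadj : (T.deleteEdges {s(u,v)}).Adj c z := by
        rw [deleteEdges_adj]
        exact ⟨h, by simpa using he⟩
      rcases hc with h' | h'
      · exact Or.inl (h'.trans hadj.reachable)
      · exact Or.inr (h'.trans hadj.reachable)

lemma not_reachable_deleteEdges {T : SimpleGraph V} (hT : T.IsAcyclic) {u v : V}
    (h : T.Adj u v) : ¬ (T.deleteEdges {s(u,v)}).Reachable u v :=
  (isAcyclic_iff_forall_adj_isBridge.mp hT) h

/-- Exchange: a walk in `F ⊔ {cd}` yields reachability information in `F`. -/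
lemma reachable_sup_edge {F : SimpleGraph V} {c d x y : V}
    (h : (F ⊔ SimpleGraph.fromEdgeSet {s(c,d)}).Reachable x y) :
    F.Reachable x y ∨ (F.Reachable x c ∧ F.Reachable d y) ∨
      (F.Reachable x d ∧ F.Reachable c y) := by
  obtain ⟨W⟩ := h
  induction W with
  | nil => exact Or.inl (Reachable.refl _)
  | @cons a b y h p ih =>
    rcases (sup_adj _ _ _ _).mp h with hF | he
    · rcases ih with h1 | ⟨h1, h2⟩ | ⟨h1, h2⟩
      · exact Or.inl (hF.reachable.trans h1)
      · exact Or.inr (Or.inl ⟨hF.reachable.trans h1, h2⟩)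
      · exact Or.inr (Or.inr ⟨hF.reachable.trans h1, h2⟩)
    · rw [fromEdgeSet_adj, Set.mem_singleton_iff, Sym2.eq_iff] at he
      obtain ⟨⟨rfl, rfl⟩ | ⟨rfl, rfl⟩, -⟩ := he
      · rcases ih with h1 | ⟨h1, h2⟩ | ⟨h1, h2⟩
        · exact Or.inr (Or.inl ⟨Reachable.refl _, h1⟩)
        · exact Or.inr (Or.inl ⟨Reachable.refl _, h2⟩)
        · exact Or.inl h2
      · rcases ih with h1 | ⟨h1, h2⟩ | ⟨h1, h2⟩
        · exact Or.inr (Or.inr ⟨Reachable.refl _, h1⟩)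
        · exact Or.inl h2
        · exact Or.inr (Or.inr ⟨Reachable.refl _, h2⟩)

/-- The edge–swap lemma: removing the edge `ab` of a tree and adding an edge
between the two components gives again a tree. -/
lemma isTree_swap {T : SimpleGraph V} (hT : T.IsTree) {a b c d : V} (hab : T.Adj a b)
    (hc : (T.deleteEdges {s(a,b)}).Reachable a c)
    (hd : (T.deleteEdges {s(a,b)}).Reachable b d) (hcd : c ≠ d) :
    ((T.deleteEdges {s(a,b)}) ⊔ SimpleGraph.fromEdgeSet {s(c,d)}).IsTree := by
  set T₀ := T.deleteEdges {s(a,b)} with hT₀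
  have hnr : ¬ T₀.Reachable a b := not_reachable_deleteEdges hT.IsAcyclic hab
  have hncd : ¬ T₀.Reachable c d := fun h => hnr (hc.trans (h.trans hd.symm))
  have hcdS : (T₀ ⊔ SimpleGraph.fromEdgeSet {s(c,d)}).Adj c d := by
    rw [sup_adj, fromEdgeSet_adj]
    exact Or.inr ⟨rfl, hcd⟩
  constructor
  · have hne : Nonempty V := hT.isConnected.nonempty
    haveI := hne
    have key : ∀ z, (T₀ ⊔ SimpleGraph.fromEdgeSet {s(c,d)}).Reachable c z := by
      intro z
      rcases reachable_or_of_preconnected hT.isConnected.preconnected a b z with h | h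
      · exact ((hc.mono le_sup_left).symm).trans (h.mono le_sup_left)
      · exact hcdS.reachable.trans ((hd.mono le_sup_left).symm.trans (h.mono le_sup_left))
    exact ⟨fun x y => (key x).symm.trans (key y)⟩
  · rw [isAcyclic_iff_forall_adj_isBridge]
    intro x y hxy
    rcases (sup_adj _ _ _ _).mp hxy with hxy0 | hxye
    · -- an old edge of the tree
      have hTxy : T.Adj x y := hxy0.1
      have hbr : ¬ (T.deleteEdges {s(x,y)}).Reachable x y :=
        not_reachable_deleteEdges hT.IsAcyclic hTxy
      rw [isBridge_iff]
      refine fun hre => ?_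
      have hre0 : (((T₀ ⊔ SimpleGraph.fromEdgeSet {s(c,d)})).deleteEdges {s(x,y)}).Reachable x y :=
        hre
      have hre' : ((T₀.deleteEdges {s(x,y)}) ⊔ SimpleGraph.fromEdgeSet {s(c,d)}).Reachable x y := by
        refine hre0.mono ?_
        intro p q hpq
        rw [deleteEdges_adj, sup_adj] at hpq
        rcases hpq with ⟨h' | h', hpq2⟩
        · exact Or.inl (by rw [deleteEdges_adj]; exact ⟨h', hpq2⟩)
        · exact Or.inr h'
      have hmono : T₀.deleteEdges {s(x,y)} ≤ T.deleteEdges {s(x,y)} := by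
        intro p q hpq
        rw [deleteEdges_adj] at hpq ⊢
        exact ⟨hpq.1.1, hpq.2⟩
      have hmono0 : T₀.deleteEdges {s(x,y)} ≤ T₀ := deleteEdges_le _
      rcases reachable_sup_edge hre' with h' | ⟨h1, h2⟩ | ⟨h1, h2⟩
      · exact hbr (h'.mono hmono)
      · exact hncd (((h1.mono hmono0).symm).trans
          ((hxy0.reachable).trans ((h2.mono hmono0).symm)))
      · exact hncd ((h2.mono hmono0).trans
          ((hxy0.reachable.symm).trans (h1.mono hmono0)))
    · -- the new edge
      have hxyeq : s(x,y) = s(c,d) := hxye.1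
      rw [isBridge_iff]
      refine fun hre => ?_
      have hdel : ((T₀ ⊔ SimpleGraph.fromEdgeSet {s(c,d)}).deleteEdges {s(x,y)}) = T₀ := by
        ext p q
        rw [deleteEdges_adj, sup_adj, fromEdgeSet_adj, hxyeq]
        constructor
        · rintro ⟨h' | h', h2⟩
          · exact h'
          · exact absurd h'.1 (by simpa using h2)
        · intro h'
          refine ⟨Or.inl h', ?_⟩
          simp only [Set.mem_singleton_iff]
          intro hq
          rw [Sym2.eq_iff] at hq
          rcases hq with ⟨rfl, rfl⟩ | ⟨rfl, rfl⟩
          · exact hncd h'.reachable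
          · exact hncd h'.reachable.symm
      have hre0 : (((T₀ ⊔ SimpleGraph.fromEdgeSet {s(c,d)})).deleteEdges {s(x,y)}).Reachable x y :=
        hre
      rw [hdel] at hre0
      rw [Sym2.eq_iff] at hxyeq
      rcases hxyeq with ⟨rfl, rfl⟩ | ⟨rfl, rfl⟩
      · exact hncd hre0
      · exact hncd hre0.symm

lemma sym2_ne_of_ne {a b c d : V} (h1 : a ≠ c) (h2 : a ≠ d) : s(a,b) ≠ s(c,d) := by
  intro h
  rw [Sym2.eq_iff] at h
  rcases h with ⟨h, -⟩ | ⟨h, -⟩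
  · exact h1 h
  · exact h2 h

lemma sym2_eq_iff_right {a b c : V} (hac : a ≠ c) : s(a,b) = s(c,a) ↔ b = c := by
  rw [Sym2.eq_iff]
  constructor
  · rintro (⟨h, -⟩ | ⟨-, h⟩)
    · exact absurd h hac
    · exact h
  · intro h
    exact Or.inr ⟨rfl, h⟩

lemma card_insert_erase [DecidableEq V] {N : Finset V} {a b : V} (ha : a ∉ N) (hb : b ∈ N) :
    #(insert a (N.erase b)) = #N := by
  rw [Finset.card_insert_of_notMem (fun h => ha (Finset.mem_of_mem_erase h)),
    Finset.card_erase_add_one hb]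

variable [Fintype V]

lemma swap_double (G T : SimpleGraph V) (u v w σ : V)
    (hle : T ≤ G ⊔ SimpleGraph.fromEdgeSet {s(u,v)}) (htree : T.IsTree)
    (huv : T.Adj u v) (hGuv : ¬ G.Adj u v)
    (hw : (T.deleteEdges {s(u,v)}).Reachable v w)
    (hwσ : (T.deleteEdges {s(u,v)}).Adj w σ)
    (hσv : ((T.deleteEdges {s(u,v)}).deleteEdges {s(w,σ)}).Reachable σ v)
    (hGvw : G.Adj v w) (hGuσ : G.Adj u σ) :
    ∃ T₂ : SimpleGraph V, T₂ ≤ G ∧ T₂.IsTree ∧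
      (univ.filter fun x => T₂.degree x = 1).card ≤
        (univ.filter fun x => T.degree x = 1).card := by
  have hnr : ¬ (T.deleteEdges {s(u,v)}).Reachable u v :=
    not_reachable_deleteEdges htree.IsAcyclic huv
  have hwv : w ≠ v := hGvw.ne'
  have hσv' : σ ≠ v := fun h => hGuv (h ▸ hGuσ)
  have hσw : σ ≠ w := hwσ.ne'
  have huv' : u ≠ v := huv.ne
  have huw : u ≠ w := by rintro rfl; exact hnr hw.symm
  have hσSv : (T.deleteEdges {s(u,v)}).Reachable v σ := hw.trans hwσ.reachable
  have huσ : u ≠ σ := by rintro rfl; exact hnr hσSv.symm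
  have hwσT : T.Adj w σ := ((deleteEdges_adj).mp hwσ).1
  have hacyc0 : (T.deleteEdges {s(u,v)}).IsAcyclic :=
    isAcyclic_mono (deleteEdges_le _) htree.IsAcyclic

  have hTuσ : ¬ T.Adj u σ := by
    intro h
    have h0 : (T.deleteEdges {s(u,v)}).Adj u σ := by
      rw [deleteEdges_adj]
      refine ⟨h, ?_⟩
      simp only [Set.mem_singleton_iff]
      exact fun he => hσv' (Sym2.congr_right.mp he)
    exact hnr (h0.reachable.trans hσSv.symm)
  -- no tree edge between v and w
  have hT0vw : ¬ (T.deleteEdges {s(u,v)}).Adj v w := by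
    intro hvw
    obtain ⟨q0⟩ := hσv
    have hq0 := q0.toPath.2
    set pσ : ((T.deleteEdges {s(u,v)}).deleteEdges {s(w,σ)}).Walk σ v := q0.toPath.1 with hpσ
    have hedges : ∀ e ∈ pσ.edges, e ∈ (T.deleteEdges {s(u,v)}).edgeSet ∧ e ≠ s(w,σ) := by
      intro e he
      have := pσ.edges_subset_edgeSet he
      rw [edgeSet_deleteEdges] at this
      exact ⟨this.1, by simpa using this.2⟩
    set pt : (T.deleteEdges {s(u,v)}).Walk σ v :=
      pσ.transfer (T.deleteEdges {s(u,v)}) (fun e he => (hedges e he).1) with hpt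
    have hptpath : pt.IsPath := hq0.transfer _
    have hptedge : s(w,σ) ∉ pt.edges := by
      rw [hpt, Walk.edges_transfer]
      exact fun he => (hedges _ he).2 rfl
    by_cases hws : w ∈ pt.support
    · have hQpath : (pt.takeUntil w hws).IsPath := hptpath.takeUntil hws
      have hQedge : s(w,σ) ∉ (pt.takeUntil w hws).edges :=
        fun he => hptedge (Walk.edges_takeUntil_subset _ _ he)
      exact hacyc0 _ ((Walk.cons_isCycle_iff _ hwσ).mpr ⟨hQpath, hQedge⟩)
    · have hP2path : (Walk.cons hwσ pt).IsPath := by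
        rw [Walk.cons_isPath_iff]
        exact ⟨hptpath, hws⟩
      refine hacyc0 _ ((Walk.cons_isCycle_iff _ hvw).mpr ⟨hP2path, ?_⟩)
      rw [Walk.edges_cons]
      simp only [List.mem_cons]
      rintro (he | he)
      · rw [Sym2.eq_iff] at he
        rcases he with ⟨h1, -⟩ | ⟨h1, -⟩
        · exact hwv h1.symm
        · exact hσv' h1.symm
      · exact hws (pt.snd_mem_support_of_mem_edges he)
  have hTvw : ¬ T.Adj v w := by
    intro h
    apply hT0vw
    rw [deleteEdges_adj]
    refine ⟨h, ?_⟩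
    simp only [Set.mem_singleton_iff]
    rw [Sym2.eq_iff]
    rintro (⟨h1, -⟩ | ⟨-, h2⟩)
    · exact huv' h1.symm
    · exact huw h2.symm
  -- trees
  have hmono1 : (T.deleteEdges {s(u,v)}).deleteEdges {s(w,σ)} ≤ T.deleteEdges {s(w,σ)} := by
    intro p q h
    rw [deleteEdges_adj] at h ⊢
    rw [deleteEdges_adj] at h
    exact ⟨h.1.1, h.2⟩
  have htree1 : ((T.deleteEdges {s(w,σ)}) ⊔ SimpleGraph.fromEdgeSet {s(w,v)}).IsTree :=
    isTree_swap htree hwσT (Reachable.refl w) (hσv.mono hmono1) hwv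
  have hT1uv : ((T.deleteEdges {s(w,σ)}) ⊔ SimpleGraph.fromEdgeSet {s(w,v)}).Adj u v := by
    rw [sup_adj, deleteEdges_adj]
    refine Or.inl ⟨huv, ?_⟩
    simp only [Set.mem_singleton_iff]
    exact sym2_ne_of_ne huw huσ
  have hmono2 : (T.deleteEdges {s(u,v)}).deleteEdges {s(w,σ)} ≤
      ((T.deleteEdges {s(w,σ)}) ⊔ SimpleGraph.fromEdgeSet {s(w,v)}).deleteEdges {s(u,v)} := by
    intro p q h
    rw [deleteEdges_adj] at h
    rw [deleteEdges_adj] at h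
    rw [deleteEdges_adj, sup_adj, deleteEdges_adj]
    exact ⟨Or.inl ⟨h.1.1, h.2⟩, h.1.2⟩
  have htree2 : ((((T.deleteEdges {s(w,σ)}) ⊔ SimpleGraph.fromEdgeSet {s(w,v)}).deleteEdges
      {s(u,v)}) ⊔ SimpleGraph.fromEdgeSet {s(u,σ)}).IsTree :=
    isTree_swap htree1 hT1uv (Reachable.refl u) ((hσv.symm).mono hmono2) huσ
  set S := (((T.deleteEdges {s(w,σ)}) ⊔ SimpleGraph.fromEdgeSet {s(w,v)}).deleteEdges
      {s(u,v)}) ⊔ SimpleGraph.fromEdgeSet {s(u,σ)} with hSdef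
  have hStree : S.IsTree := htree2
  clear_value S
  have hSadj : ∀ p q, S.Adj p q ↔
      ((((T.Adj p q ∧ s(p,q) ≠ s(w,σ)) ∨ (s(p,q) = s(w,v) ∧ p ≠ q)) ∧ s(p,q) ≠ s(u,v)) ∨
        (s(p,q) = s(u,σ) ∧ p ≠ q)) := by
    intro p q
    rw [hSdef, sup_adj, deleteEdges_adj, sup_adj, deleteEdges_adj, fromEdgeSet_adj,
      fromEdgeSet_adj]
    simp only [Set.mem_singleton_iff]
  have hSle : S ≤ G := by
    intro p q hpq
    rcases (hSadj p q).mp hpq with ⟨h1 | h1, h2⟩ | h1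
    · rcases (sup_adj _ _ _ _).mp (hle h1.1) with h' | h'
      · exact h'
      · rw [fromEdgeSet_adj, Set.mem_singleton_iff] at h'
        exact absurd h'.1 h2
    · rw [Sym2.eq_iff] at h1
      rcases h1.1 with ⟨rfl, rfl⟩ | ⟨rfl, rfl⟩
      · exact hGvw.symm
      · exact hGvw
    · rw [Sym2.eq_iff] at h1
      rcases h1.1 with ⟨rfl, rfl⟩ | ⟨rfl, rfl⟩
      · exact hGuσ
      · exact hGuσ.symm
  -- degrees are all preserved
  have hnbru : S.neighborFinset u = insert σ ((T.neighborFinset u).erase v) := by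
    ext z
    simp only [mem_neighborFinset, Finset.mem_insert, Finset.mem_erase, hSadj]
    constructor
    · rintro (⟨⟨h1, -⟩ | ⟨h1, -⟩, h2⟩ | ⟨h1, -⟩)
      · exact Or.inr ⟨fun hzv => h2 (by rw [hzv]), h1⟩
      · exact absurd h1 (sym2_ne_of_ne huw huv')
      · exact Or.inl (Sym2.congr_right.mp h1)
    · rintro (rfl | ⟨h2, h1⟩)
      · exact Or.inr ⟨rfl, huσ⟩
      · refine Or.inl ⟨Or.inl ⟨h1, sym2_ne_of_ne huw huσ⟩, fun he => h2 (Sym2.congr_right.mp he)⟩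
  have hnbrv : S.neighborFinset v = insert w ((T.neighborFinset v).erase u) := by
    ext z
    simp only [mem_neighborFinset, Finset.mem_insert, Finset.mem_erase, hSadj]
    constructor
    · rintro (⟨⟨h1, -⟩ | ⟨h1, -⟩, h2⟩ | ⟨h1, -⟩)
      · refine Or.inr ⟨fun hzu => ?_, h1⟩
        subst hzu
        exact h2 (Sym2.eq_swap)
      · exact Or.inl ((sym2_eq_iff_right (Ne.symm hwv)).mp h1)
      · exact absurd h1 (sym2_ne_of_ne (Ne.symm huv') (Ne.symm hσv'))
    · rintro (rfl | ⟨h2, h1⟩)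
      · refine Or.inl ⟨Or.inr ⟨(sym2_eq_iff_right (Ne.symm hwv)).mpr rfl, Ne.symm hwv⟩, ?_⟩
        exact fun he => huw ((sym2_eq_iff_right (Ne.symm huv')).mp he).symm
      · refine Or.inl ⟨Or.inl ⟨h1, sym2_ne_of_ne (Ne.symm hwv) (Ne.symm hσv')⟩, ?_⟩
        exact fun he => h2 ((sym2_eq_iff_right (Ne.symm huv')).mp he)
  have hnbrw : S.neighborFinset w = insert v ((T.neighborFinset w).erase σ) := by
    ext z
    simp only [mem_neighborFinset, Finset.mem_insert, Finset.mem_erase, hSadj]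
    constructor
    · rintro (⟨⟨h1, h2⟩ | ⟨h1, -⟩, -⟩ | ⟨h1, -⟩)
      · exact Or.inr ⟨fun hzσ => h2 (by rw [hzσ]), h1⟩
      · exact Or.inl (Sym2.congr_right.mp h1)
      · exact absurd h1 (sym2_ne_of_ne huw.symm hσw.symm)
    · rintro (rfl | ⟨h2, h1⟩)
      · refine Or.inl ⟨Or.inr ⟨rfl, hwv⟩, sym2_ne_of_ne huw.symm hwv⟩
      · refine Or.inl ⟨Or.inl ⟨h1, fun he => h2 (Sym2.congr_right.mp he)⟩,
          sym2_ne_of_ne huw.symm hwv⟩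
  have hnbrσ : S.neighborFinset σ = insert u ((T.neighborFinset σ).erase w) := by
    ext z
    simp only [mem_neighborFinset, Finset.mem_insert, Finset.mem_erase, hSadj]
    constructor
    · rintro (⟨⟨h1, h2⟩ | ⟨h1, -⟩, -⟩ | ⟨h1, -⟩)
      · exact Or.inr ⟨fun hzw => h2 ((sym2_eq_iff_right hσw).mpr hzw), h1⟩
      · exact absurd h1 (sym2_ne_of_ne hσw hσv')
      · exact Or.inl ((sym2_eq_iff_right huσ.symm).mp h1)
    · rintro (rfl | ⟨h2, h1⟩)
      · refine Or.inr ⟨(sym2_eq_iff_right huσ.symm).mpr rfl, huσ.symm⟩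
      · refine Or.inl ⟨Or.inl ⟨h1, fun he => h2 ((sym2_eq_iff_right hσw).mp he)⟩,
          sym2_ne_of_ne huσ.symm hσv'⟩
  have hnbro : ∀ p, p ≠ u → p ≠ v → p ≠ w → p ≠ σ →
      S.neighborFinset p = T.neighborFinset p := by
    intro p hpu hpv hpw hpσ
    ext z
    simp only [mem_neighborFinset, hSadj]
    constructor
    · rintro (⟨⟨h1, -⟩ | ⟨h1, -⟩, -⟩ | ⟨h1, -⟩)
      · exact h1
      · exact absurd h1 (sym2_ne_of_ne hpw hpv)
      · exact absurd h1 (sym2_ne_of_ne hpu hpσ)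
    · intro h1
      exact Or.inl ⟨Or.inl ⟨h1, sym2_ne_of_ne hpw hpσ⟩, sym2_ne_of_ne hpu hpv⟩
  have hdeg : ∀ p, S.degree p = T.degree p := by
    intro p
    show #(S.neighborFinset p) = #(T.neighborFinset p)
    by_cases hpu : p = u
    · subst hpu
      rw [hnbru]
      exact card_insert_erase (by rw [mem_neighborFinset]; exact hTuσ)
        (by rw [mem_neighborFinset]; exact huv)
    by_cases hpv : p = v
    · subst hpv
      rw [hnbrv]
      exact card_insert_erase (by rw [mem_neighborFinset]; exact hTvw)
        (by rw [mem_neighborFinset]; exact huv.symm)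
    by_cases hpw : p = w
    · subst hpw
      rw [hnbrw]
      exact card_insert_erase (by rw [mem_neighborFinset]; exact fun h => hTvw h.symm)
        (by rw [mem_neighborFinset]; exact hwσT)
    by_cases hpσ : p = σ
    · subst hpσ
      rw [hnbrσ]
      exact card_insert_erase (by rw [mem_neighborFinset]; exact fun h => hTuσ h.symm)
        (by rw [mem_neighborFinset]; exact hwσT.symm)
    · rw [hnbro p hpu hpv hpw hpσ]
  refine ⟨S, hSle, hStree, le_of_eq ?_⟩
  congr 1
  apply Finset.filter_congr
  intro x _
  rw [hdeg x]

variable [Fintype V]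

lemma swap_leaf (G T : SimpleGraph V) (u v y : V)
    (hle : T ≤ G ⊔ SimpleGraph.fromEdgeSet {s(u,v)}) (htree : T.IsTree)
    (huv : T.Adj u v) (hGuv : ¬ G.Adj u v)
    (hy : (T.deleteEdges {s(u,v)}).Reachable v y) (hGuy : G.Adj u y)
    (hdy : T.degree y = 1) :
    ∃ T₂ : SimpleGraph V, T₂ ≤ G ∧ T₂.IsTree ∧
      (univ.filter fun x => T₂.degree x = 1).card ≤
        (univ.filter fun x => T.degree x = 1).card := by
  have hnr : ¬ (T.deleteEdges {s(u,v)}).Reachable u v :=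
    not_reachable_deleteEdges htree.IsAcyclic huv
  have huy : u ≠ y := hGuy.ne
  have hvy : v ≠ y := fun h => hGuv (h ▸ hGuy)
  have huv' : u ≠ v := huv.ne
  have hTuy : ¬ T.Adj u y := by
    intro h
    have h0 : (T.deleteEdges {s(u,v)}).Adj u y := by
      rw [deleteEdges_adj]
      refine ⟨h, ?_⟩
      rw [Set.mem_singleton_iff, Sym2.eq_iff]
      rintro (⟨-, h2⟩ | ⟨h1, -⟩)
      · exact hvy h2.symm
      · exact huv' h1
    exact hnr (h0.reachable.trans hy.symm)
  set S := (T.deleteEdges {s(u,v)}) ⊔ SimpleGraph.fromEdgeSet {s(u,y)} with hSdef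
  clear_value S
  have hStree : S.IsTree := by
    rw [hSdef]; exact isTree_swap htree huv (Reachable.refl u) hy huy
  have hSadj : ∀ p q, S.Adj p q ↔
      (T.Adj p q ∧ s(p,q) ≠ s(u,v)) ∨ (s(p,q) = s(u,y) ∧ p ≠ q) := by
    intro p q
    rw [hSdef, sup_adj, deleteEdges_adj, fromEdgeSet_adj]
    simp only [Set.mem_singleton_iff]
  have hSle : S ≤ G := by
    intro p q hpq
    rcases (hSadj p q).mp hpq with ⟨h1, h2⟩ | ⟨h1, h2⟩
    · rcases (sup_adj _ _ _ _).mp (hle h1) with h' | h'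
      · exact h'
      · rw [fromEdgeSet_adj, Set.mem_singleton_iff] at h'
        exact absurd h'.1 h2
    · rw [Sym2.eq_iff] at h1
      rcases h1 with ⟨rfl, rfl⟩ | ⟨rfl, rfl⟩
      · exact hGuy
      · exact hGuy.symm
  -- degrees
  have hnbru : S.neighborFinset u = insert y ((T.neighborFinset u).erase v) := by
    ext z
    simp only [mem_neighborFinset, Finset.mem_insert, Finset.mem_erase, hSadj,
      Sym2.congr_right]
    constructor
    · rintro (⟨h1, h2⟩ | ⟨rfl, -⟩)
      · exact Or.inr ⟨fun hzv => h2 (by rw [hzv]), h1⟩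
      · exact Or.inl rfl
    · rintro (rfl | ⟨h2, h1⟩)
      · exact Or.inr ⟨rfl, huy⟩
      · exact Or.inl ⟨h1, fun he => h2 (Sym2.congr_right.mp he)⟩
  have hdegu : S.degree u = T.degree u := by
    show #(S.neighborFinset u) = #(T.neighborFinset u)
    rw [hnbru, card_insert_of_notMem, card_erase_add_one]
    · rw [mem_neighborFinset]; exact huv
    · rw [Finset.mem_erase, mem_neighborFinset]
      rintro ⟨-, h⟩; exact hTuy h
  have hnbry : S.neighborFinset y = insert u (T.neighborFinset y) := by
    ext z
    simp only [mem_neighborFinset, Finset.mem_insert, hSadj]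
    constructor
    · rintro (⟨h1, -⟩ | ⟨h1, h2⟩)
      · exact Or.inr h1
      · rw [Sym2.eq_iff] at h1
        rcases h1 with ⟨h3, -⟩ | ⟨-, h4⟩
        · exact absurd h3 (Ne.symm huy)
        · exact Or.inl h4
    · rintro (rfl | h1)
      · refine Or.inr ⟨?_, Ne.symm huy⟩
        rw [Sym2.eq_iff]; right; exact ⟨rfl, rfl⟩
      · refine Or.inl ⟨h1, fun he => ?_⟩
        rw [Sym2.eq_iff] at he
        rcases he with ⟨h3, -⟩ | ⟨h3, -⟩
        · exact huy h3.symm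
        · exact hvy h3.symm
  have hdegy : S.degree y = 2 := by
    show #(S.neighborFinset y) = 2
    rw [hnbry, card_insert_of_notMem]
    · have : #(T.neighborFinset y) = 1 := hdy
      rw [this]
    · rw [mem_neighborFinset]
      exact fun h => hTuy h.symm
  have hdego : ∀ p, p ≠ u → p ≠ v → p ≠ y → S.degree p = T.degree p := by
    intro p hpu hpv hpy
    show #(S.neighborFinset p) = #(T.neighborFinset p)
    congr 1
    ext z
    simp only [mem_neighborFinset, hSadj]
    constructor
    · rintro (⟨h1, -⟩ | ⟨h1, -⟩)
      · exact h1
      · rw [Sym2.eq_iff] at h1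
        rcases h1 with ⟨h3, -⟩ | ⟨h3, -⟩
        · exact absurd h3 hpu
        · exact absurd h3 hpy
    · intro h1
      refine Or.inl ⟨h1, fun he => ?_⟩
      rw [Sym2.eq_iff] at he
      rcases he with ⟨h3, -⟩ | ⟨h3, -⟩
      · exact hpu h3
      · exact hpv h3
  have hsub : (univ.filter fun x => S.degree x = 1) ⊆
      insert v ((univ.filter fun x => T.degree x = 1).erase y) := by
    intro x hx
    rw [Finset.mem_filter] at hx
    by_cases hxv : x = v
    · subst hxv; exact Finset.mem_insert_self _ _
    by_cases hxy : x = y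
    · subst hxy; rw [hdegy] at hx; omega
    refine Finset.mem_insert_of_mem ?_
    rw [Finset.mem_erase, Finset.mem_filter]
    by_cases hxu : x = u
    · subst hxu
      rw [hdegu] at hx
      exact ⟨hxy, Finset.mem_univ _, hx.2⟩
    · rw [hdego x hxu hxv hxy] at hx
      exact ⟨hxy, Finset.mem_univ _, hx.2⟩
  refine ⟨S, hSle, hStree, ?_⟩
  refine le_trans (Finset.card_le_card hsub) ?_
  refine le_trans (Finset.card_insert_le _ _) ?_
  exact le_of_eq (Finset.card_erase_add_one
    (by rw [Finset.mem_filter]; exact ⟨Finset.mem_univ _, hdy⟩))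

lemma count_side (G T : SimpleGraph V) (u v : V)
    (htree : T.IsTree) (huv : T.Adj u v) (hGuv : ¬ G.Adj u v)
    (h1 : ∀ y, (T.deleteEdges {s(u,v)}).Reachable v y → G.Adj u y → T.degree y ≠ 1)
    (h3 : ¬ ∃ w x, (T.deleteEdges {s(u,v)}).Reachable v w ∧ (T.deleteEdges {s(u,v)}).Adj w x ∧
        ((T.deleteEdges {s(u,v)}).deleteEdges {s(w,x)}).Reachable x v ∧ G.Adj v w ∧ G.Adj u x) :
    (univ.filter fun x => (T.deleteEdges {s(u,v)}).Reachable v x ∧ G.Adj v x).card +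
      (univ.filter fun x => (T.deleteEdges {s(u,v)}).Reachable v x ∧ G.Adj u x).card + 1 ≤
      (univ.filter fun x => (T.deleteEdges {s(u,v)}).Reachable v x).card := by
  have hnr : ¬ (T.deleteEdges {s(u,v)}).Reachable u v :=
    not_reachable_deleteEdges htree.IsAcyclic huv
  have hacyc0 : (T.deleteEdges {s(u,v)}).IsAcyclic :=
    isAcyclic_mono (deleteEdges_le _) htree.IsAcyclic
  have hex : ∀ x, ∃ w₀, ((T.deleteEdges {s(u,v)}).Reachable v x ∧ G.Adj u x) →
      ((T.deleteEdges {s(u,v)}).Reachable v w₀ ∧ w₀ ≠ v ∧ ¬ G.Adj v w₀ ∧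
        ∃ _ : (T.deleteEdges {s(u,v)}).Reachable w₀ v,
          ∀ p : (T.deleteEdges {s(u,v)}).Walk w₀ v, p.IsPath → p.getVert 1 = x) := by
    intro x
    by_cases hx : (T.deleteEdges {s(u,v)}).Reachable v x ∧ G.Adj u x
    swap
    · exact ⟨x, fun h => absurd h hx⟩
    obtain ⟨hRx, hAx⟩ := hx
    have hxv : x ≠ v := fun h => hGuv (h ▸ hAx)
    have hxu : x ≠ u := by rintro rfl; exact hnr hRx.symm
    have hdx1 : T.degree x ≠ 1 := h1 x hRx hAx
    have hdpos : 0 < T.degree x := by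
      rw [degree_pos_iff_exists_adj]
      obtain ⟨W⟩ := htree.isConnected.preconnected x v
      cases W with
      | nil => exact absurd rfl hxv
      | cons h p => exact ⟨_, h⟩
    have hdx : 1 < T.degree x := by omega
    have hnb : (T.deleteEdges {s(u,v)}).neighborFinset x = T.neighborFinset x := by
      ext z
      simp only [mem_neighborFinset, deleteEdges_adj, Set.mem_singleton_iff]
      constructor
      · exact fun h => h.1
      · intro h
        exact ⟨h, sym2_ne_of_ne hxu hxv⟩
    obtain ⟨q0⟩ := hRx.symm
    obtain ⟨W, hWp⟩ := q0.toPath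
    revert hWp
    cases W with
    | nil => intro _; exact absurd rfl hxv
    | @cons _ s₀ _ hadj W' =>
      intro hWp
      have hWp' : W'.IsPath ∧ x ∉ W'.support := by
        rw [Walk.cons_isPath_iff] at hWp; exact hWp
      have hcard : 1 < #((T.deleteEdges {s(u,v)}).neighborFinset x) := by
        rw [hnb]; exact hdx
      obtain ⟨w₀, hw₀mem, hw₀ne⟩ := Finset.exists_mem_ne hcard s₀
      rw [mem_neighborFinset] at hw₀mem
      have hxw_edge : s(x, w₀) ∉ (Walk.cons hadj W').edges := by
        rw [Walk.edges_cons]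
        simp only [List.mem_cons]
        rintro (he | he)
        · rw [Sym2.eq_iff] at he
          rcases he with ⟨-, h2⟩ | ⟨h2, -⟩
          · exact hw₀ne h2
          · exact hadj.ne h2
        · exact hWp'.2 (Walk.fst_mem_support_of_mem_edges W' he)
      have hw₀sup : w₀ ∉ (Walk.cons hadj W').support := by
        intro hmem
        have hQ := hWp.takeUntil hmem
        have heq : (⟨_, hQ⟩ : (T.deleteEdges {s(u,v)}).Path x w₀) = Path.singleton hw₀mem :=
          hacyc0.path_unique _ _
        have hval : (Walk.cons hadj W').takeUntil w₀ hmem = Walk.cons hw₀mem Walk.nil :=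
          congrArg Subtype.val heq
        have hedge : s(x,w₀) ∈ ((Walk.cons hadj W').takeUntil w₀ hmem).edges := by
          rw [hval]; simp
        exact hxw_edge (Walk.edges_takeUntil_subset _ _ hedge)
      have hw₀v : w₀ ≠ v := by
        intro h
        subst h
        exact hw₀sup (Walk.end_mem_support _)
      have hP2 : (Walk.cons hw₀mem.symm (Walk.cons hadj W')).IsPath := by
        rw [Walk.cons_isPath_iff]; exact ⟨hWp, hw₀sup⟩
      have hnGvw : ¬ G.Adj v w₀ := by
        intro hGvw
        apply h3
        refine ⟨w₀, x, hRx.trans hw₀mem.reachable, hw₀mem.symm, ?_, hGvw, hAx⟩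
        refine ⟨(Walk.cons hadj W').toDeleteEdges {s(w₀,x)} ?_⟩
        intro e he
        simp only [Set.mem_singleton_iff]
        intro hee
        have hswap : (s(x,w₀) : Sym2 V) = e := by rw [hee]; exact Sym2.eq_swap
        exact hxw_edge (by rw [hswap]; exact he)
      refine ⟨w₀, fun _ => ⟨hRx.trans hw₀mem.reachable, hw₀v, hnGvw,
        ⟨Walk.cons hw₀mem.symm (Walk.cons hadj W')⟩, ?_⟩⟩
      intro p hp
      have heq : (⟨p, hp⟩ : (T.deleteEdges {s(u,v)}).Path w₀ v) =
          ⟨Walk.cons hw₀mem.symm (Walk.cons hadj W'), hP2⟩ := hacyc0.path_unique _ _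
      have hval : p = Walk.cons hw₀mem.symm (Walk.cons hadj W') := congrArg Subtype.val heq
      rw [hval]
      exact Walk.getVert_cons_succ (n := 0) _ _
  choose f hf using hex
  set A := univ.filter (fun x => (T.deleteEdges {s(u,v)}).Reachable v x ∧ G.Adj v x) with hA
  set B := univ.filter (fun x => (T.deleteEdges {s(u,v)}).Reachable v x ∧ G.Adj u x) with hB
  set Sv := univ.filter (fun x => (T.deleteEdges {s(u,v)}).Reachable v x) with hSv
  have hBf : ∀ x ∈ B, (T.deleteEdges {s(u,v)}).Reachable v (f x) ∧ f x ≠ v ∧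
      ¬ G.Adj v (f x) ∧ ∃ _ : (T.deleteEdges {s(u,v)}).Reachable (f x) v,
        ∀ p : (T.deleteEdges {s(u,v)}).Walk (f x) v, p.IsPath → p.getVert 1 = x := by
    intro x hx
    rw [hB, Finset.mem_filter] at hx
    exact hf x hx.2
  have hinj : Set.InjOn f B := by
    intro x1 h1x x2 h2x he
    obtain ⟨-, -, -, hr1, hu1⟩ := hBf x1 h1x
    obtain ⟨-, -, -, -, hu2⟩ := hBf x2 h2x
    rw [← he] at hu2
    obtain ⟨q⟩ := hr1
    have hp := q.toPath.2
    rw [← hu1 q.toPath.1 hp, ← hu2 q.toPath.1 hp]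
  have hsub : A ∪ B.image f ⊆ Sv.erase v := by
    intro z hz
    rw [Finset.mem_union] at hz
    rcases hz with hz | hz
    · rw [hA, Finset.mem_filter] at hz
      rw [Finset.mem_erase, hSv, Finset.mem_filter]
      exact ⟨hz.2.2.ne', Finset.mem_univ _, hz.2.1⟩
    · rw [Finset.mem_image] at hz
      obtain ⟨x, hxB, rfl⟩ := hz
      obtain ⟨hr, hne, -, -⟩ := hBf x hxB
      rw [Finset.mem_erase, hSv, Finset.mem_filter]
      exact ⟨hne, Finset.mem_univ _, hr⟩
  have hdisj : Disjoint A (B.image f) := by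
    rw [Finset.disjoint_left]
    intro z hzA hzB
    rw [Finset.mem_image] at hzB
    obtain ⟨x, hxB, rfl⟩ := hzB
    obtain ⟨-, -, hnadj, -⟩ := hBf x hxB
    rw [hA, Finset.mem_filter] at hzA
    exact hnadj hzA.2.2
  have hvSv : v ∈ Sv := by
    rw [hSv, Finset.mem_filter]
    exact ⟨Finset.mem_univ _, Reachable.refl _⟩
  calc A.card + B.card + 1 = (A ∪ B.image f).card + 1 := by
        rw [Finset.card_union_of_disjoint hdisj, Finset.card_image_of_injOn hinj]
    _ ≤ (Sv.erase v).card + 1 := by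
        exact Nat.add_le_add_right (Finset.card_le_card hsub) 1
    _ = Sv.card := Finset.card_erase_add_one hvSv

lemma crux (G : SimpleGraph V) (u v : V) (hGuv : ¬ G.Adj u v)
    (hdeg : (Fintype.card V : ℤ) - 1 ≤ (G.degree u : ℤ) + (G.degree v : ℤ))
    (T : SimpleGraph V) (hle : T ≤ G ⊔ SimpleGraph.fromEdgeSet {s(u,v)})
    (htree : T.IsTree) :
    ∃ T₂ : SimpleGraph V, T₂ ≤ G ∧ T₂.IsTree ∧
      (univ.filter fun x => T₂.degree x = 1).card ≤
        (univ.filter fun x => T.degree x = 1).card := by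
  by_cases huv : T.Adj u v
  swap
  · refine ⟨T, ?_, htree, le_rfl⟩
    intro p q h
    rcases (sup_adj _ _ _ _).mp (hle h) with h' | h'
    · exact h'
    · rw [fromEdgeSet_adj, Set.mem_singleton_iff, Sym2.eq_iff] at h'
      exfalso
      rcases h'.1 with ⟨rfl, rfl⟩ | ⟨rfl, rfl⟩
      · exact huv h
      · exact huv h.symm
  have hswap : (s(v,u) : Sym2 V) = s(u,v) := Sym2.eq_swap
  have hnr : ¬ (T.deleteEdges {s(u,v)}).Reachable u v :=
    not_reachable_deleteEdges htree.IsAcyclic huv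
  by_cases c1 : ∃ y, (T.deleteEdges {s(u,v)}).Reachable v y ∧ G.Adj u y ∧ T.degree y = 1
  · obtain ⟨y, hy1, hy2, hy3⟩ := c1
    exact swap_leaf G T u v y hle htree huv hGuv hy1 hy2 hy3
  by_cases c2 : ∃ y, (T.deleteEdges {s(u,v)}).Reachable u y ∧ G.Adj v y ∧ T.degree y = 1
  · obtain ⟨y, hy1, hy2, hy3⟩ := c2
    refine swap_leaf G T v u y ?_ htree huv.symm (fun h => hGuv h.symm) ?_ hy2 hy3
    · rw [hswap]; exact hle
    · rw [hswap]; exact hy1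
  by_cases c3 : ∃ w x, (T.deleteEdges {s(u,v)}).Reachable v w ∧
      (T.deleteEdges {s(u,v)}).Adj w x ∧
      ((T.deleteEdges {s(u,v)}).deleteEdges {s(w,x)}).Reachable x v ∧ G.Adj v w ∧ G.Adj u x
  · obtain ⟨w, x, p1, p2, p3, p4, p5⟩ := c3
    exact swap_double G T u v w x hle htree huv hGuv p1 p2 p3 p4 p5
  by_cases c4 : ∃ w x, (T.deleteEdges {s(u,v)}).Reachable u w ∧
      (T.deleteEdges {s(u,v)}).Adj w x ∧
      ((T.deleteEdges {s(u,v)}).deleteEdges {s(w,x)}).Reachable x u ∧ G.Adj u w ∧ G.Adj v x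
  · obtain ⟨w, x, p1, p2, p3, p4, p5⟩ := c4
    refine swap_double G T v u w x ?_ htree huv.symm (fun h => hGuv h.symm) ?_ ?_ ?_ p4 p5
    · rw [hswap]; exact hle
    · rw [hswap]; exact p1
    · rw [hswap]; exact p2
    · rw [hswap]; exact p3
  exfalso
  have hcount1 := count_side G T u v htree huv hGuv
    (fun y hy hA hd => c1 ⟨y, hy, hA, hd⟩) c3
  have hcount2' := count_side G T v u htree huv.symm (fun h => hGuv h.symm)
    (by rw [hswap]; exact fun y hy hA hd => c2 ⟨y, hy, hA, hd⟩)
    (by rw [hswap]; exact c4)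
  rw [hswap] at hcount2'
  -- partition of the vertex set
  have hcover : ∀ x, (T.deleteEdges {s(u,v)}).Reachable u x ∨
      (T.deleteEdges {s(u,v)}).Reachable v x :=
    reachable_or_of_preconnected htree.isConnected.preconnected u v
  have hdisj2 : ∀ x, (T.deleteEdges {s(u,v)}).Reachable u x →
      (T.deleteEdges {s(u,v)}).Reachable v x → False :=
    fun x h1 h2 => hnr (h1.trans h2.symm)
  have hn : (univ.filter fun x => (T.deleteEdges {s(u,v)}).Reachable u x).card +
      (univ.filter fun x => (T.deleteEdges {s(u,v)}).Reachable v x).card = Fintype.card V := by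
    rw [← Finset.card_union_of_disjoint (by
      rw [Finset.disjoint_left]
      intro z hz1 hz2
      rw [Finset.mem_filter] at hz1 hz2
      exact hdisj2 z hz1.2 hz2.2)]
    rw [show (univ.filter fun x => (T.deleteEdges {s(u,v)}).Reachable u x) ∪
        (univ.filter fun x => (T.deleteEdges {s(u,v)}).Reachable v x) = univ by
      ext z
      simp only [Finset.mem_union, Finset.mem_filter, Finset.mem_univ, true_and, iff_true]
      exact hcover z]
    exact card_univ
  have hdu : G.degree u =
      (univ.filter fun x => (T.deleteEdges {s(u,v)}).Reachable u x ∧ G.Adj u x).card +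
      (univ.filter fun x => (T.deleteEdges {s(u,v)}).Reachable v x ∧ G.Adj u x).card := by
    rw [← Finset.card_union_of_disjoint (by
      rw [Finset.disjoint_left]
      intro z hz1 hz2
      rw [Finset.mem_filter] at hz1 hz2
      exact hdisj2 z hz1.2.1 hz2.2.1)]
    show #(G.neighborFinset u) = _
    congr 1
    ext z
    simp only [mem_neighborFinset, Finset.mem_union, Finset.mem_filter, Finset.mem_univ,
      true_and]
    constructor
    · intro h
      rcases hcover z with h' | h'
      · exact Or.inl ⟨h', h⟩
      · exact Or.inr ⟨h', h⟩
    · rintro (⟨-, h⟩ | ⟨-, h⟩) <;> exact h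
  have hdv : G.degree v =
      (univ.filter fun x => (T.deleteEdges {s(u,v)}).Reachable u x ∧ G.Adj v x).card +
      (univ.filter fun x => (T.deleteEdges {s(u,v)}).Reachable v x ∧ G.Adj v x).card := by
    rw [← Finset.card_union_of_disjoint (by
      rw [Finset.disjoint_left]
      intro z hz1 hz2
      rw [Finset.mem_filter] at hz1 hz2
      exact hdisj2 z hz1.2.1 hz2.2.1)]
    show #(G.neighborFinset v) = _
    congr 1
    ext z
    simp only [mem_neighborFinset, Finset.mem_union, Finset.mem_filter, Finset.mem_univ,
      true_and]
    constructor
    · intro h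
      rcases hcover z with h' | h'
      · exact Or.inl ⟨h', h⟩
      · exact Or.inr ⟨h', h⟩
    · rintro (⟨-, h⟩ | ⟨-, h⟩) <;> exact h
  have hfin : G.degree u + G.degree v + 2 ≤ Fintype.card V := by omega
  omega

end ClosureAux

/-- **Theorem (Broersma–Tuinstra closure step).**  Let `G` be a connected graph
of order `n`, let `2 ≤ k ≤ n - 1`, and let `u, v` be distinct nonadjacent
vertices of `G` with `d(u) + d(v) ≥ n - 1`.  Then `G` has a spanning
`k`-ended-tree if and only if the graph `G + uv` obtained by adding the edge
`uv` has one. -/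
theorem closure_step_spanning_k_ended_tree {n k : ℕ}
    (G : SimpleGraph (Fin n)) (hG : G.Connected)
    (hk2 : 2 ≤ k) (hkn : k ≤ n - 1)
    (u v : Fin n) (hne : u ≠ v) (hadj : ¬ G.Adj u v)
    (hdeg : (n : ℤ) - 1 ≤ (G.degree u : ℤ) + (G.degree v : ℤ)) :
    HasSpanningKEndedTree G k ↔
      HasSpanningKEndedTree (G ⊔ SimpleGraph.fromEdgeSet {s(u, v)}) k := by
  constructor
  · rintro ⟨T, hle, ht, hl⟩
    exact ⟨T, le_trans hle le_sup_left, ht, hl⟩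
  · rintro ⟨T, hle, ht, hl⟩
    have hdeg' : (Fintype.card (Fin n) : ℤ) - 1 ≤ (G.degree u : ℤ) + (G.degree v : ℤ) := by
      rw [Fintype.card_fin]; exact hdeg
    obtain ⟨T₂, h1, h2, h3⟩ := ClosureAux.crux G u v hadj hdeg' T hle ht
    exact ⟨T₂, h1, h2, le_trans h3 hl⟩
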